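/- Let ν ≥ 1 and Λ₀ > 0. Define for a real number u the truncation u₊ = max{0, u}, and define the remainder R(u,h) = (u+h)₊^ν − u₊^ν − ν u₊^{ν−1} h. Then there exists a constant C (depending only on ν and Λ₀) such that for all u, h with |u| ≤ Λ₀ and |u+h| ≤ Λ₀, one has |R(u,h)| ≤ C |h|^{min(ν,2)}. -/

import Mathlib

open Real Set Filter Asymptotics

/-- Subadditivity consequence: `a^p - b^p ≤ (a-b)^p` for `0 ≤ b ≤ a`, `0 ≤ p ≤ 1`. -/
lemma aux_sub_rpow {p : ℝ} (hp0 : 0 ≤ p) (hp1 : p ≤ 1) {a b : ℝ} (hb : 0 ≤ b)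
    (hba : b ≤ a) : a ^ p - b ^ p ≤ (a - b) ^ p := by
  have h := NNReal.rpow_add_le_add_rpow (a - b).toNNReal b.toNNReal hp0 hp1
  have h1 : (a - b).toNNReal + b.toNNReal = a.toNNReal := by
    rw [← Real.toNNReal_add (by linarith) hb]
    congr 1; ring
  rw [h1] at h
  have h2 := NNReal.coe_le_coe.2 h
  push_cast at h2
  rw [Real.coe_toNNReal _ (by linarith), Real.coe_toNNReal _ hb,
    Real.coe_toNNReal _ (by linarith)] at h2
  linarith

/-- Derivative of the truncated power everywhere, for `ν > 1`. -/
lemma aux_deriv {ν : ℝ} (hν : 1 < ν) (x : ℝ) :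
    HasDerivAt (fun t : ℝ => (max 0 t) ^ ν) (ν * (max 0 x) ^ (ν - 1)) x := by
  rcases lt_trichotomy x 0 with hx | rfl | hx
  · have h0 : (fun t : ℝ => (max 0 t) ^ ν) =ᶠ[nhds x] fun _ => (0 : ℝ) := by
      filter_upwards [isOpen_Iio.eventually_mem (show x ∈ Iio (0:ℝ) from hx)] with t ht
      rw [max_eq_left (le_of_lt ht), Real.zero_rpow (by positivity)]
    have hd : HasDerivAt (fun _ : ℝ => (0 : ℝ)) 0 x := hasDerivAt_const x 0
    have := hd.congr_of_eventuallyEq h0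
    rw [max_eq_left hx.le, Real.zero_rpow (by linarith), mul_zero]
    exact this
  · have hz : ν * (max 0 (0:ℝ)) ^ (ν - 1) = 0 := by
      rw [max_self, Real.zero_rpow (by linarith), mul_zero]
    rw [hz, hasDerivAt_iff_isLittleO]
    have hf0 : (max 0 (0:ℝ)) ^ ν = 0 := by
      rw [max_self, Real.zero_rpow (by positivity)]
    simp only [hf0, smul_zero, sub_zero]
    have hO : (fun t : ℝ => (max 0 t) ^ ν) =O[nhds 0] fun t => |t| ^ (ν - 1) * t := by
      apply Asymptotics.isBigO_of_le
      intro t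
      have h1 : (max 0 t) ^ ν ≤ |t| ^ ν := by
        apply Real.rpow_le_rpow (le_max_left _ _) _ (by positivity)
        exact max_le (abs_nonneg t) (le_abs_self t)
      have h2 : |t| ^ (ν - 1) * |t| = |t| ^ ν := by
        calc |t| ^ (ν - 1) * |t| = |t| ^ (ν - 1) * |t| ^ (1:ℝ) := by rw [Real.rpow_one]
          _ = |t| ^ (ν - 1 + 1) :=
            (Real.rpow_add_of_nonneg (abs_nonneg t) (by linarith) zero_le_one).symm
          _ = |t| ^ ν := by ring_nf
      rw [Real.norm_eq_abs, Real.norm_eq_abs,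
        abs_of_nonneg (Real.rpow_nonneg (le_max_left _ _) _), abs_mul,
        abs_of_nonneg (Real.rpow_nonneg (abs_nonneg t) _), h2]
      exact h1
    have ho : (fun t : ℝ => |t| ^ (ν - 1) * t) =o[nhds 0] fun t : ℝ => t := by
      have h1 : (fun t : ℝ => |t| ^ (ν - 1)) =o[nhds (0:ℝ)] (fun _ : ℝ => (1:ℝ)) := by
        rw [Asymptotics.isLittleO_one_iff]
        have hc : Continuous fun t : ℝ => |t| ^ (ν - 1) :=
          continuous_abs.rpow_const fun t => Or.inr (by linarith)
        have ht := hc.tendsto 0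
        simpa [Real.zero_rpow (show ν - 1 ≠ 0 by linarith)] using ht
      have h2 : (fun t : ℝ => t) =O[nhds (0:ℝ)] (fun t : ℝ => t) := Asymptotics.isBigO_refl _ _
      simpa using h1.mul_isBigO h2
    exact hO.trans_isLittleO ho
  · have h0 : (fun t : ℝ => (max 0 t) ^ ν) =ᶠ[nhds x] fun t => t ^ ν := by
      filter_upwards [isOpen_Ioi.eventually_mem (show x ∈ Ioi (0:ℝ) from hx)] with t ht
      rw [max_eq_right (le_of_lt ht)]
    have hd : HasDerivAt (fun t : ℝ => t ^ ν) (ν * x ^ (ν - 1)) x :=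
      Real.hasDerivAt_rpow_const (Or.inl hx.ne')
    have := hd.congr_of_eventuallyEq h0
    rw [max_eq_right hx.le]
    exact this

/-- Hölder continuity of `x ↦ ν * (max 0 x)^(ν-1)` with exponent `min ν 2 - 1`. -/
lemma aux_holder {ν Λ₀ : ℝ} (hν : 1 < ν) (hΛ : 0 < Λ₀) :
    ∃ L : ℝ, 0 < L ∧ ∀ a b : ℝ, |a| ≤ Λ₀ → |b| ≤ Λ₀ →
      |ν * (max 0 a) ^ (ν - 1) - ν * (max 0 b) ^ (ν - 1)| ≤
        L * |a - b| ^ (min ν 2 - 1) := by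
  have habs : ∀ a b : ℝ, |max 0 a - max 0 b| ≤ |a - b| := by
    intro a b
    have := abs_max_sub_max_le_abs a b 0
    simpa [max_comm] using this
  have hmem : ∀ a : ℝ, |a| ≤ Λ₀ → max 0 a ∈ Icc (0:ℝ) Λ₀ := by
    intro a ha
    exact ⟨le_max_left _ _, max_le hΛ.le ((le_abs_self a).trans ha)⟩
  rcases le_total ν 2 with h2 | h2
  · -- 1 < ν ≤ 2 : exponent p = ν - 1 ∈ (0,1]
    refine ⟨ν, by linarith, fun a b ha hb => ?_⟩
    rw [min_eq_left h2]
    set p := ν - 1 with hp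
    have hp0 : 0 ≤ p := by linarith
    have hp1 : p ≤ 1 := by linarith
    have key : ∀ x y : ℝ, 0 ≤ y → y ≤ x → x ^ p - y ^ p ≤ |x - y| ^ p := by
      intro x y hy hyx
      rw [abs_of_nonneg (by linarith)]
      exact aux_sub_rpow hp0 hp1 hy hyx
    have main : |(max 0 a) ^ p - (max 0 b) ^ p| ≤ |max 0 a - max 0 b| ^ p := by
      rcases le_total (max 0 b) (max 0 a) with hab | hab
      · rw [abs_of_nonneg (sub_nonneg.2 (Real.rpow_le_rpow (le_max_left _ _) hab hp0))]
        exact key _ _ (le_max_left _ _) hab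
      · rw [abs_of_nonpos (sub_nonpos.2 (Real.rpow_le_rpow (le_max_left _ _) hab hp0)),
          neg_sub, abs_sub_comm]
        exact key _ _ (le_max_left _ _) hab
    have step : |max 0 a - max 0 b| ^ p ≤ |a - b| ^ p :=
      Real.rpow_le_rpow (abs_nonneg _) (habs a b) hp0
    calc |ν * (max 0 a) ^ p - ν * (max 0 b) ^ p|
        = ν * |(max 0 a) ^ p - (max 0 b) ^ p| := by
          rw [← mul_sub, abs_mul, abs_of_nonneg (by linarith : (0:ℝ) ≤ ν)]
      _ ≤ ν * |a - b| ^ p := by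
          apply mul_le_mul_of_nonneg_left (main.trans step) (by linarith)
  · -- ν ≥ 2 : Lipschitz
    set M := max 1 (Λ₀ ^ (ν - 1 - 1)) with hM
    have hM0 : 0 < M := lt_of_lt_of_le zero_lt_one (le_max_left _ _)
    have hK0 : 0 < ν * ((ν - 1) * M) :=
      mul_pos (by linarith) (mul_pos (by linarith) hM0)
    refine ⟨ν * ((ν - 1) * M) + 1, by linarith, fun a b ha hb => ?_⟩
    rw [min_eq_right h2, show (2:ℝ) - 1 = 1 by norm_num, Real.rpow_one]
    have hlip : ∀ x y : ℝ, x ∈ Icc (0:ℝ) Λ₀ → y ∈ Icc (0:ℝ) Λ₀ →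
        |x ^ (ν - 1) - y ^ (ν - 1)| ≤ (ν - 1) * M * |x - y| := by
      intro x y hx hy
      have hmvt := Convex.norm_image_sub_le_of_norm_hasDerivWithin_le
        (f := fun t : ℝ => t ^ (ν - 1)) (f' := fun t : ℝ => (ν - 1) * t ^ (ν - 1 - 1))
        (s := Icc (0:ℝ) Λ₀) (C := (ν - 1) * M)
        (fun t _ => (Real.hasDerivAt_rpow_const (x := t) (p := ν - 1)
          (Or.inr (by linarith))).hasDerivWithinAt)
        (fun t htm => ?_) (convex_Icc _ _) hy hx
      · simpa [Real.norm_eq_abs] using hmvt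
      · rw [Real.norm_eq_abs, abs_mul, abs_of_nonneg (by linarith : (0:ℝ) ≤ ν - 1),
          abs_of_nonneg (Real.rpow_nonneg htm.1 _)]
        apply mul_le_mul_of_nonneg_left _ (by linarith : (0:ℝ) ≤ ν - 1)
        rcases le_total t 1 with ht1 | ht1
        · exact le_trans (Real.rpow_le_one htm.1 ht1 (by linarith)) (le_max_left _ _)
        · exact le_trans (Real.rpow_le_rpow (by linarith) htm.2 (by linarith))
            (le_max_right _ _)
    calc |ν * (max 0 a) ^ (ν - 1) - ν * (max 0 b) ^ (ν - 1)|
        = ν * |(max 0 a) ^ (ν - 1) - (max 0 b) ^ (ν - 1)| := by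
          rw [← mul_sub, abs_mul, abs_of_nonneg (by linarith : (0:ℝ) ≤ ν)]
      _ ≤ ν * ((ν - 1) * M * |max 0 a - max 0 b|) := by
          apply mul_le_mul_of_nonneg_left (hlip _ _ (hmem a ha) (hmem b hb)) (by linarith)
      _ ≤ ν * ((ν - 1) * M) * |a - b| := by
          rw [mul_assoc ν ((ν - 1) * M) |a - b|]
          apply mul_le_mul_of_nonneg_left _ (by linarith : (0:ℝ) ≤ ν)
          exact mul_le_mul_of_nonneg_left (habs a b)
            (mul_nonneg (by linarith) hM0.le)
      _ ≤ (ν * ((ν - 1) * M) + 1) * |a - b| := by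
          apply mul_le_mul_of_nonneg_right _ (abs_nonneg _)
          linarith

theorem stmt_2 (ν Λ₀ : ℝ) (hν : 1 ≤ ν) (hΛ : 0 < Λ₀) :
    ∃ C : ℝ, 0 < C ∧ ∀ u h : ℝ, |u| ≤ Λ₀ → |u + h| ≤ Λ₀ →
      |(max 0 (u + h)) ^ ν - (max 0 u) ^ ν -
        (if 0 < u then ν * u ^ (ν - 1) * h else 0)| ≤ C * |h| ^ (min ν 2) := by
  rcases eq_or_lt_of_le hν with hν1 | hν1
  · -- ν = 1
    refine ⟨2, by norm_num, fun u h hu huh => ?_⟩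
    subst hν1
    have hmin : min (1:ℝ) 2 = 1 := by norm_num
    rw [hmin, Real.rpow_one]
    have key : |max 0 (u + h) - max 0 u| ≤ |h| := by
      have := abs_max_sub_max_le_abs (u + h) u 0
      simpa [max_comm, add_sub_cancel_left] using this
    have habs := abs_nonneg h
    by_cases hu0 : 0 < u
    · rw [if_pos hu0]
      have he : (1:ℝ) * u ^ ((1:ℝ) - 1) * h = h := by
        rw [sub_self, Real.rpow_zero]; ring
      rw [Real.rpow_one, Real.rpow_one, he]
      calc |max 0 (u + h) - max 0 u - h| ≤ |max 0 (u + h) - max 0 u| + |h| := abs_sub _ _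
        _ ≤ |h| + |h| := by linarith
        _ = 2 * |h| := by ring
    · rw [if_neg hu0, sub_zero, Real.rpow_one, Real.rpow_one]
      linarith
  · -- ν > 1
    set α := min ν 2 - 1 with hα
    have hα0 : 0 ≤ α := by
      rw [hα]
      rcases le_total ν 2 with h2 | h2
      · rw [min_eq_left h2]; linarith
      · rw [min_eq_right h2]; linarith
    have hα1 : α + 1 = min ν 2 := by ring
    obtain ⟨L, hL0, hHol⟩ := aux_holder hν1 hΛ
    refine ⟨L, hL0, fun u h hu huh => ?_⟩
    have hlin : (if 0 < u then ν * u ^ (ν - 1) * h else 0) = ν * (max 0 u) ^ (ν - 1) * h := by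
      by_cases hu0 : 0 < u
      · rw [if_pos hu0, max_eq_right hu0.le]
      · rw [if_neg hu0, max_eq_left (not_lt.1 hu0), Real.zero_rpow (by linarith), mul_zero,
          zero_mul]
    rw [hlin]
    by_cases hh : h = 0
    · subst hh
      simp only [add_zero, sub_self, mul_zero, sub_zero, abs_zero]
      positivity
    -- MVT step
    have hder : ∀ x : ℝ, HasDerivAt (fun t : ℝ => (max 0 t) ^ ν)
        (ν * (max 0 x) ^ (ν - 1)) x := fun x => aux_deriv hν1 x
    obtain ⟨ξ, hξu, hξΛ, heq⟩ : ∃ ξ : ℝ, |ξ - u| ≤ |h| ∧ |ξ| ≤ Λ₀ ∧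
        (max 0 (u + h)) ^ ν - (max 0 u) ^ ν = ν * (max 0 ξ) ^ (ν - 1) * h := by
      rcases lt_or_gt_of_ne hh with hneg | hpos
      · -- h < 0 : interval [u+h, u]
        obtain ⟨ξ, hmem, hslope⟩ := exists_hasDerivAt_eq_slope
          (fun t : ℝ => (max 0 t) ^ ν) (fun t => ν * (max 0 t) ^ (ν - 1))
          (show u + h < u by linarith)
          (fun x _ => (hder x).continuousAt.continuousWithinAt)
          (fun x _ => hder x)
        refine ⟨ξ, ?_, ?_, ?_⟩
        · rw [abs_of_nonpos (by linarith [hmem.2] : ξ - u ≤ 0),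
            abs_of_neg hneg]
          linarith [hmem.1]
        · rw [abs_le] at hu huh ⊢
          constructor <;> [linarith [hmem.1, huh.1]; linarith [hmem.2, hu.2]]
        · rw [eq_div_iff (by linarith : u - (u + h) ≠ 0)] at hslope
          nlinarith [hslope]
      · -- h > 0 : interval [u, u+h]
        obtain ⟨ξ, hmem, hslope⟩ := exists_hasDerivAt_eq_slope
          (fun t : ℝ => (max 0 t) ^ ν) (fun t => ν * (max 0 t) ^ (ν - 1))
          (show u < u + h by linarith)
          (fun x _ => (hder x).continuousAt.continuousWithinAt)
          (fun x _ => hder x)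
        refine ⟨ξ, ?_, ?_, ?_⟩
        · rw [abs_of_nonneg (by linarith [hmem.1] : 0 ≤ ξ - u),
            abs_of_pos hpos]
          linarith [hmem.2]
        · rw [abs_le] at hu huh ⊢
          constructor <;> [linarith [hmem.1, hu.1]; linarith [hmem.2, huh.2]]
        · rw [eq_div_iff (by linarith : u + h - u ≠ 0)] at hslope
          nlinarith [hslope]
    have hrw : (max 0 (u + h)) ^ ν - (max 0 u) ^ ν - ν * (max 0 u) ^ (ν - 1) * h
        = (ν * (max 0 ξ) ^ (ν - 1) - ν * (max 0 u) ^ (ν - 1)) * h := by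
      rw [heq]; ring
    rw [hrw, abs_mul]
    have h1 : |ν * (max 0 ξ) ^ (ν - 1) - ν * (max 0 u) ^ (ν - 1)| ≤ L * |ξ - u| ^ α :=
      hHol ξ u hξΛ hu
    have h2 : |ξ - u| ^ α ≤ |h| ^ α := Real.rpow_le_rpow (abs_nonneg _) hξu hα0
    have h3 : |h| ^ (min ν 2) = |h| ^ α * |h| := by
      rw [← hα1, Real.rpow_add_of_nonneg (abs_nonneg h) hα0 zero_le_one, Real.rpow_one]
    calc |ν * (max 0 ξ) ^ (ν - 1) - ν * (max 0 u) ^ (ν - 1)| * |h|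
        ≤ L * |h| ^ α * |h| := by
          apply mul_le_mul_of_nonneg_right _ (abs_nonneg h)
          exact h1.trans (mul_le_mul_of_nonneg_left h2 hL0.le)
      _ = L * |h| ^ (min ν 2) := by rw [h3]; ring
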